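/- Define u₀ : [0,1] → ℝ by u₀(x) = 0 for x ≤ 1/2 and u₀(x) = x² − x + 1/4 (i.e. u₀(x) = (x − 1/2)²) for x ≥ 1/2. Then u₀ minimizes the functional L[v] := ∫₀¹ ( (1/2) v′(x)² + v(x) − x v′(x) ) dx over all nonnegative convex Lipschitz functions v : [0,1] → ℝ; that is, L[u₀] ≤ L[v] for every such v. -/

import Mathlib

open MeasureTheory intervalIntegral

noncomputable section

/-- The one-dimensional principal-agent functional
`L[v] = ∫₀¹ (½ v'(x)² + v(x) − x v'(x)) dx`. -/
def L1d (v : ℝ → ℝ) : ℝ :=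
  ∫ x in (0:ℝ)..1, (1 / 2 * (deriv v x) ^ 2 + v x - x * deriv v x)

namespace PAanon

open Set Filter

/-- derivative of the explicit minimizer, as a total function -/
def G (x : ℝ) : ℝ := 2 * max (x - 1/2) 0

lemma G_cont : Continuous G :=
  continuous_const.mul ((continuous_id.sub continuous_const).max continuous_const)

lemma G_nonneg (x : ℝ) : 0 ≤ G x := by
  have : (0:ℝ) ≤ max (x - 1/2) 0 := le_max_right _ _
  unfold G; linarith

lemma G_le {x : ℝ} (hx : x ≤ 1) : G x ≤ 1 := by
  unfold G
  rcases le_total (x - 1/2) 0 with h | h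
  · rw [max_eq_right h]; norm_num
  · rw [max_eq_left h]; linarith

lemma G_eq_of_le {x : ℝ} (h : x ≤ 1/2) : G x = 0 := by
  unfold G; rw [max_eq_right (by linarith)]; ring

lemma G_eq_of_ge {x : ℝ} (h : 1/2 ≤ x) : G x = 2*x - 1 := by
  unfold G; rw [max_eq_left (by linarith)]; ring

/-- right derivative of `v` at `x` -/
def rdv (v : ℝ → ℝ) (x : ℝ) : ℝ := sInf (slope v x '' Ioo x 1)

variable {v : ℝ → ℝ} {K : NNReal}

lemma rd_hasDeriv (hconv : ConvexOn ℝ (Icc 0 1) v) {x : ℝ} (hx : x ∈ Ioo (0:ℝ) 1) :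
    HasDerivWithinAt v (rdv v x) (Ioi x) x := by
  have hxI : x ∈ Icc (0:ℝ) 1 := ⟨hx.1.le, hx.2.le⟩
  have hsm := hconv.slope_mono hxI
  have hsub : Ioo x 1 ⊆ (Icc (0:ℝ) 1) \ {x} := by
    intro y hy
    exact ⟨⟨(hx.1.trans hy.1).le, hy.2.le⟩, ne_of_gt hy.1⟩
  have hmono : MonotoneOn (slope v x) (Ioo x 1) := hsm.mono hsub
  have h0m : (0:ℝ) ∈ (Icc (0:ℝ) 1) \ {x} := ⟨⟨le_refl 0, zero_le_one⟩, (ne_of_lt hx.1)⟩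
  have hbdd : BddBelow (slope v x '' Ioo x 1) := by
    refine ⟨slope v x 0, ?_⟩
    rintro _ ⟨y, hy, rfl⟩
    exact hsm h0m (hsub hy) (hx.1.trans hy.1).le
  have hne : (Ioo x 1).Nonempty := nonempty_Ioo.2 hx.2
  have ht := hmono.tendsto_nhdsWithin_Ioo_right hne hbdd
  rw [hasDerivWithinAt_iff_tendsto_slope' (notMem_Ioi.2 le_rfl)]
  exact ht

lemma ae_diff (hK : LipschitzOnWith K v (Icc 0 1)) :
    ∀ᵐ x : ℝ, x ∈ Ioo (0:ℝ) 1 → DifferentiableAt ℝ v x := by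
  obtain ⟨w, hw, hvw⟩ := hK.extend_real
  filter_upwards [hw.ae_differentiableAt] with x hx hx01
  have hev : v =ᶠ[nhds x] w := by
    filter_upwards [Icc_mem_nhds hx01.1 hx01.2] with y hy using hvw hy
  exact hx.congr_of_eventuallyEq hev

lemma rd_eq (hconv : ConvexOn ℝ (Icc 0 1) v) {x : ℝ} (hx : x ∈ Ioo (0:ℝ) 1)
    (hd : DifferentiableAt ℝ v x) : rdv v x = deriv v x := by
  have h1 := (rd_hasDeriv hconv hx).derivWithin (uniqueDiffWithinAt_Ioi x)
  have h2 := (hd.hasDerivAt.hasDerivWithinAt (s := Ioi x)).derivWithin (uniqueDiffWithinAt_Ioi x)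
  rw [← h1, ← h2]

lemma deriv_bound (hK : LipschitzOnWith K v (Icc 0 1)) {x : ℝ} (hx : x ∈ Ioo (0:ℝ) 1) :
    |deriv v x| ≤ K := by
  have h1 : ‖fderiv ℝ v x‖ ≤ K :=
    norm_fderiv_le_of_lipschitzOn ℝ (Icc_mem_nhds hx.1 hx.2) hK
  have h2 : deriv v x = fderiv ℝ v x 1 := rfl
  calc |deriv v x| = ‖fderiv ℝ v x 1‖ := by rw [h2]; rfl
    _ ≤ ‖fderiv ℝ v x‖ * ‖(1:ℝ)‖ := (fderiv ℝ v x).le_opNorm 1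
    _ ≤ K := by rw [norm_one, mul_one]; exact h1

lemma v_bound (hK : LipschitzOnWith K v (Icc 0 1)) {x : ℝ} (hx : x ∈ Icc (0:ℝ) 1) :
    |v x| ≤ |v 0| + K := by
  have h := hK.dist_le_mul x hx 0 (left_mem_Icc.2 zero_le_one)
  rw [Real.dist_eq, Real.dist_eq] at h
  have hx1 : |x - 0| ≤ 1 := by rw [sub_zero, abs_of_nonneg hx.1]; exact hx.2
  have : |v x - v 0| ≤ K := by
    calc |v x - v 0| ≤ K * |x - 0| := h
      _ ≤ K * 1 := mul_le_mul_of_nonneg_left hx1 K.coe_nonneg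
      _ = K := mul_one _
  calc |v x| = |v x - v 0 + v 0| := by ring_nf
    _ ≤ |v x - v 0| + |v 0| := abs_add_le _ _
    _ ≤ K + |v 0| := by linarith
    _ = |v 0| + K := by ring

lemma abs_mul_le {a b A B : ℝ} (ha : |a| ≤ A) (hb : |b| ≤ B) : |a * b| ≤ A * B := by
  rw [abs_mul]
  exact mul_le_mul ha hb (abs_nonneg _) (le_trans (abs_nonneg _) ha)

lemma ae_ne_one : ∀ᵐ x : ℝ, x ≠ 1 := by
  rw [ae_iff]
  have : {x : ℝ | ¬x ≠ 1} = {1} := by ext y; simp [not_not]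
  rw [this]; exact Real.volume_singleton

/-- integrability workhorse -/
lemma II_aux {f : ℝ → ℝ} {C : ℝ} (hm : AEStronglyMeasurable f (volume.restrict (Ioc (0:ℝ) 1)))
    (hbd : ∀ x ∈ Ioo (0:ℝ) 1, |f x| ≤ C) {a b : ℝ} (hab : a ≤ b)
    (h : Ioc a b ⊆ Ioc (0:ℝ) 1) :
    IntervalIntegrable f volume a b := by
  have hne1 := ae_ne_one
  have hint : IntegrableOn f (Ioc (0:ℝ) 1) := by
    refine Integrable.mono' (g := fun _ => C)
      (integrableOn_const measure_Ioc_lt_top.ne) hm ?_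
    filter_upwards [ae_restrict_mem measurableSet_Ioc, ae_restrict_of_ae hne1] with x hx hx1
    have : x ∈ Ioo (0:ℝ) 1 := ⟨hx.1, lt_of_le_of_ne hx.2 hx1⟩
    simpa [Real.norm_eq_abs] using hbd x this
  rw [intervalIntegrable_iff_integrableOn_Ioc_of_le hab]
  exact hint.mono_set h

lemma II_eqOn {f g : ℝ → ℝ} {a b : ℝ} (hab : a ≤ b) (h : EqOn f g (Icc a b))
    (hg : ContinuousOn g (Icc a b)) : IntervalIntegrable f volume a b := by
  have h1 : IntegrableOn g (Icc a b) := hg.integrableOn_Icc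
  have h2 : IntegrableOn f (Icc a b) := h1.congr_fun (fun x hx => (h hx).symm) measurableSet_Icc
  rw [← uIcc_of_le hab] at h2
  exact h2.intervalIntegrable

lemma u0_deriv {u₀ : ℝ → ℝ} (hu₀ : ∀ x, u₀ x = if x ≤ 1 / 2 then 0 else (x - 1 / 2) ^ 2)
    (x : ℝ) : HasDerivAt u₀ (G x) x := by
  rcases lt_trichotomy x (1/2) with h | h | h
  · rw [G_eq_of_le h.le]
    have hev : u₀ =ᶠ[nhds x] (fun _ => (0:ℝ)) := by
      filter_upwards [Iio_mem_nhds h] with y hy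
      rw [hu₀ y, if_pos (le_of_lt hy)]
    exact (hasDerivAt_const x 0).congr_of_eventuallyEq hev
  · subst h
    rw [G_eq_of_le le_rfl, hasDerivAt_iff_isLittleO]
    have hbO : (fun y => u₀ y - u₀ (1/2) - (y - 1/2) • (0:ℝ))
        =O[nhds (1/2:ℝ)] fun y => (y - 1/2)^2 := by
      apply Asymptotics.isBigO_of_le
      intro y
      rw [hu₀ y, hu₀ (1/2), if_pos le_rfl]
      by_cases hy : y ≤ 1/2
      · rw [if_pos hy]; simp [Real.norm_eq_abs]; positivity
      · rw [if_neg hy]; simp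
    have h1 : Tendsto (fun y : ℝ => y - 1/2) (nhds (1/2 : ℝ)) (nhds 0) := by
      have := (continuous_id.sub (continuous_const (y := (1/2:ℝ)))).tendsto (1/2:ℝ)
      simpa [Pi.sub_def] using this
    have h2 : (fun y:ℝ => y - 1/2) =o[nhds (1/2:ℝ)] (fun _ => (1:ℝ)) :=
      (Asymptotics.isLittleO_one_iff ℝ).2 h1
    have h3 := (Asymptotics.isBigO_refl (fun y:ℝ => y - 1/2) (nhds (1/2:ℝ))).mul_isLittleO h2
    have h4 : (fun y:ℝ => (y - 1/2)^2) =o[nhds (1/2:ℝ)] (fun y => y - 1/2) := by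
      simpa [sq] using h3
    exact hbO.trans_isLittleO h4
  · rw [G_eq_of_ge h.le]
    have hd : HasDerivAt (fun y : ℝ => (y - 1/2)^2) (2*x-1) x := by
      have := ((hasDerivAt_id x).sub_const (1/2:ℝ)).pow 2
      simp only [id_eq] at this
      exact this.congr_deriv (by norm_num; ring)
    apply hd.congr_of_eventuallyEq
    filter_upwards [Ioi_mem_nhds h] with y hy
    rw [hu₀ y, if_neg (not_le.2 hy)]

lemma u0_val {u₀ : ℝ → ℝ} (hu₀ : ∀ x, u₀ x = if x ≤ 1 / 2 then 0 else (x - 1 / 2) ^ 2) :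
    L1d u₀ = -(1/12) := by
  have hder : ∀ x, deriv u₀ x = G x := fun x => (u0_deriv hu₀ x).deriv
  have hfun : (fun x => 1/2 * (deriv u₀ x)^2 + u₀ x - x * deriv u₀ x)
      = fun x => 1/2 * (G x)^2 + u₀ x - x * G x := funext fun x => by rw [hder]
  rw [L1d]
  simp only [hfun]
  have hEq1 : EqOn (fun x => 1/2 * (G x)^2 + u₀ x - x * G x) (fun _ => (0:ℝ))
      (Icc (0:ℝ) (1/2)) := by
    intro x hx
    simp only
    rw [G_eq_of_le hx.2, hu₀ x, if_pos hx.2]; ring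
  have hEq2 : EqOn (fun x => 1/2 * (G x)^2 + u₀ x - x * G x) (fun x => x^2 - 2*x + 3/4)
      (Icc (1/2:ℝ) 1) := by
    intro x hx
    simp only
    rw [G_eq_of_ge hx.1]
    by_cases hle : x ≤ 1/2
    · have hx2 : x = 1/2 := le_antisymm hle hx.1
      subst hx2
      rw [hu₀ (1/2), if_pos le_rfl]; norm_num
    · rw [hu₀ x, if_neg hle]; ring
  have hI1 : IntervalIntegrable (fun x => 1/2 * (G x)^2 + u₀ x - x * G x) volume 0 (1/2) :=
    II_eqOn (by norm_num) hEq1 continuousOn_const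
  have hI2 : IntervalIntegrable (fun x => 1/2 * (G x)^2 + u₀ x - x * G x) volume (1/2) 1 :=
    II_eqOn (by norm_num) hEq2
      ((by continuity : Continuous (fun x : ℝ => x^2 - 2*x + 3/4)).continuousOn)
  rw [← integral_add_adjacent_intervals hI1 hI2]
  have huIcc1 : uIcc (0:ℝ) (1/2) = Icc (0:ℝ) (1/2) := uIcc_of_le (by norm_num)
  have huIcc2 : uIcc (1/2:ℝ) 1 = Icc (1/2:ℝ) 1 := uIcc_of_le (by norm_num)
  have hAD : ∀ x ∈ uIcc (1/2:ℝ) 1,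
      HasDerivAt (fun y : ℝ => y^3/3 - y^2 + 3/4*y) (x^2 - 2*x + 3/4) x := by
    intro x _
    have h1 := (hasDerivAt_pow 3 x).div_const 3
    have h2 := hasDerivAt_pow 2 x
    have h3 := (hasDerivAt_id x).const_mul (3/4:ℝ)
    exact ((h1.sub h2).add h3).congr_deriv (by push_cast; ring)
  have hII : IntervalIntegrable (fun x : ℝ => x^2 - 2*x + 3/4) volume (1/2) 1 :=
    (by continuity : Continuous (fun x : ℝ => x^2 - 2*x + 3/4)).intervalIntegrable _ _
  have e1 : (∫ x in (0:ℝ)..(1/2), (1/2 * (G x)^2 + u₀ x - x * G x)) = 0 := by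
    rw [integral_congr (huIcc1 ▸ hEq1)]
    exact intervalIntegral.integral_zero
  have e2 : (∫ x in (1/2:ℝ)..1, (1/2 * (G x)^2 + u₀ x - x * G x)) = -(1/12) := by
    rw [integral_congr (huIcc2 ▸ hEq2), integral_eq_sub_of_hasDerivAt hAD hII]
    norm_num
  rw [e1, e2]
  norm_num

end PAanon

open PAanon Set Filter

set_option maxHeartbeats 2000000 in
/-- **Optimality of the explicit example.** The function `u₀(x) = 0` for `x ≤ 1/2`
and `u₀(x) = (x - 1/2)²` for `x ≥ 1/2` minimizes
`L[v] = ∫₀¹ (½ v'² + v − x v')` over all nonnegative convex Lipschitz functions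
on `[0,1]`. It is `C^{1,1}` but not `C²`, showing optimality of the regularity. -/
theorem explicit_minimizer_1d (u₀ : ℝ → ℝ)
    (hu₀ : ∀ x, u₀ x = if x ≤ 1 / 2 then 0 else (x - 1 / 2) ^ 2) :
    ∀ v : ℝ → ℝ, (∀ x ∈ Set.Icc (0:ℝ) 1, 0 ≤ v x) →
      ConvexOn ℝ (Set.Icc (0:ℝ) 1) v →
      (∃ K : NNReal, LipschitzOnWith K v (Set.Icc (0:ℝ) 1)) →
      L1d u₀ ≤ L1d v := by
  rintro v hv0 hconv ⟨K, hK⟩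
  rw [u0_val hu₀]
  set CK : ℝ := (K : ℝ) with hCK
  have hCK0 : 0 ≤ CK := K.coe_nonneg
  set Cv : ℝ := |v 0| + CK with hCv
  have hCv0 : 0 ≤ Cv := by positivity
  have hvcont : ContinuousOn v (Icc (0:ℝ) 1) := hK.continuousOn
  have hDb : ∀ x ∈ Ioo (0:ℝ) 1, |deriv v x| ≤ CK := fun x hx => deriv_bound hK hx
  have hvb : ∀ x ∈ Ioo (0:ℝ) 1, |v x| ≤ Cv := fun x hx => v_bound hK ⟨hx.1.le, hx.2.le⟩
  have hae := ae_diff hK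
  have haeq : ∀ᵐ x : ℝ, x ∈ Ioo (0:ℝ) 1 → rdv v x = deriv v x := by
    filter_upwards [hae] with x hx hx01
    exact rd_eq hconv hx01 (hx hx01)
  -- measurability ingredients
  have hvm : AEStronglyMeasurable v (volume.restrict (Ioc (0:ℝ) 1)) :=
    (hvcont.aestronglyMeasurable measurableSet_Icc).mono_measure
      (Measure.restrict_mono Ioc_subset_Icc_self le_rfl)
  have hDmeas : Measurable (deriv v) := measurable_deriv v
  -- interval integrability facts
  have hvI : ∀ a b : ℝ, a ≤ b → Icc a b ⊆ Icc (0:ℝ) 1 → IntervalIntegrable v volume a b :=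
    fun a b hab hsub => II_eqOn hab (fun _ _ => rfl) (hvcont.mono hsub)
  have hxDI : IntervalIntegrable (fun x => x * deriv v x) volume 0 (1/2) := by
    refine II_aux (C := CK) (measurable_id.mul hDmeas).aestronglyMeasurable ?_ (by norm_num)
      (Ioc_subset_Ioc le_rfl (by norm_num))
    intro x hx
    have h1 : |x| ≤ 1 := abs_le.2 ⟨by linarith [hx.1], hx.2.le⟩
    simpa using abs_mul_le h1 (hDb x hx)
  have hx1DI : IntervalIntegrable (fun x => (x - 1) * deriv v x) volume (1/2) 1 := by
    refine II_aux (C := CK) ((measurable_id.sub measurable_const).mul hDmeas).aestronglyMeasurable ?_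
      (by norm_num) (Ioc_subset_Ioc (by norm_num) le_rfl)
    intro x hx
    have h1 : |x - 1| ≤ 1 := abs_le.2 ⟨by linarith [hx.1], by linarith [hx.2]⟩
    simpa using abs_mul_le h1 (hDb x hx)
  have hf1I : IntervalIntegrable (fun x => v x + x * deriv v x) volume 0 (1/2) :=
    (hvI 0 (1/2) (by norm_num) (Icc_subset_Icc le_rfl (by norm_num))).add hxDI
  have hf2I : IntervalIntegrable (fun x => v x + (x - 1) * deriv v x) volume (1/2) 1 :=
    (hvI (1/2) 1 (by norm_num) (Icc_subset_Icc (by norm_num) le_rfl)).add hx1DI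
  -- FTC Claim 1 : ∫_0^{1/2} (v + x·rd) = (1/2)·v(1/2)
  have hd1 : ∀ x ∈ Ioo (0:ℝ) (1/2),
      HasDerivWithinAt (fun y => y * v y) (v x + x * rdv v x) (Ioi x) x := by
    intro x hx
    have hx01 : x ∈ Ioo (0:ℝ) 1 := ⟨hx.1, hx.2.trans (by norm_num)⟩
    have := (hasDerivWithinAt_id x (Ioi x)).mul (rd_hasDeriv hconv hx01)
    simpa [Pi.mul_def, id_eq] using this
  have hae1 : (fun x => v x + x * rdv v x)
      =ᵐ[volume.restrict (Ioc (0:ℝ) (1/2))] (fun x => v x + x * deriv v x) := by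
    filter_upwards [ae_restrict_mem measurableSet_Ioc, ae_restrict_of_ae haeq] with x hx hrd
    have hx01 : x ∈ Ioo (0:ℝ) 1 := ⟨hx.1, lt_of_le_of_lt hx.2 (by norm_num)⟩
    rw [hrd hx01]
  have hint1 : IntervalIntegrable (fun x => v x + x * rdv v x) volume 0 (1/2) := by
    rw [intervalIntegrable_iff_integrableOn_Ioc_of_le (by norm_num)] at hf1I ⊢
    exact hf1I.congr hae1.symm
  have hcont1 : ContinuousOn (fun x : ℝ => x * v x) (Icc 0 (1/2)) :=
    continuousOn_id.mul (hvcont.mono (Icc_subset_Icc le_rfl (by norm_num)))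
  have hC1 : (∫ x in (0:ℝ)..(1/2), (v x + x * rdv v x)) = 1/2 * v (1/2) := by
    have := integral_eq_sub_of_hasDeriv_right_of_le (by norm_num) hcont1 hd1 hint1
    rw [this]; ring
  have hCe1 : (∫ x in (0:ℝ)..(1/2), (v x + x * rdv v x))
      = ∫ x in (0:ℝ)..(1/2), (v x + x * deriv v x) := by
    apply intervalIntegral.integral_congr_ae
    filter_upwards [haeq] with x hrd hx
    rw [uIoc_of_le (by norm_num : (0:ℝ) ≤ 1/2)] at hx
    have hx01 : x ∈ Ioo (0:ℝ) 1 := ⟨hx.1, lt_of_le_of_lt hx.2 (by norm_num)⟩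
    rw [hrd hx01]
  have hsplit1 : (∫ x in (0:ℝ)..(1/2), (v x + x * deriv v x))
      = (∫ x in (0:ℝ)..(1/2), v x) + ∫ x in (0:ℝ)..(1/2), x * deriv v x :=
    integral_add (hvI 0 (1/2) (by norm_num) (Icc_subset_Icc le_rfl (by norm_num))) hxDI
  have hxDval : (∫ x in (0:ℝ)..(1/2), x * deriv v x)
      = 1/2 * v (1/2) - ∫ x in (0:ℝ)..(1/2), v x := by
    rw [hCe1] at hC1
    rw [hsplit1] at hC1
    linarith
  -- FTC Claim 2 : ∫_{1/2}^1 ((x-1)·D) = (1/2)·v(1/2) - ∫ v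
  have hd2 : ∀ x ∈ Ioo (1/2:ℝ) 1,
      HasDerivWithinAt (fun y => (y - 1) * v y) (v x + (x - 1) * rdv v x) (Ioi x) x := by
    intro x hx
    have hx01 : x ∈ Ioo (0:ℝ) 1 := ⟨lt_trans (by norm_num) hx.1, hx.2⟩
    have := ((hasDerivWithinAt_id x (Ioi x)).sub_const 1).mul (rd_hasDeriv hconv hx01)
    simpa [Pi.mul_def, id_eq] using this
  have hae2 : (fun x => v x + (x - 1) * rdv v x)
      =ᵐ[volume.restrict (Ioc (1/2:ℝ) 1)] (fun x => v x + (x - 1) * deriv v x) := by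
    filter_upwards [ae_restrict_mem measurableSet_Ioc, ae_restrict_of_ae haeq,
      ae_restrict_of_ae ae_ne_one] with x hx hrd hne
    have hx01 : x ∈ Ioo (0:ℝ) 1 := ⟨lt_trans (by norm_num) hx.1, lt_of_le_of_ne hx.2 hne⟩
    rw [hrd hx01]
  have hint2 : IntervalIntegrable (fun x => v x + (x - 1) * rdv v x) volume (1/2) 1 := by
    rw [intervalIntegrable_iff_integrableOn_Ioc_of_le (by norm_num)] at hf2I ⊢
    exact hf2I.congr hae2.symm
  have hcont2 : ContinuousOn (fun x : ℝ => (x - 1) * v x) (Icc (1/2) 1) :=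
    (continuousOn_id.sub continuousOn_const).mul (hvcont.mono (Icc_subset_Icc (by norm_num) le_rfl))
  have hC2 : (∫ x in (1/2:ℝ)..1, (v x + (x - 1) * rdv v x)) = 1/2 * v (1/2) := by
    have := integral_eq_sub_of_hasDeriv_right_of_le (by norm_num) hcont2 hd2 hint2
    rw [this]; ring
  have hCe2 : (∫ x in (1/2:ℝ)..1, (v x + (x - 1) * rdv v x))
      = ∫ x in (1/2:ℝ)..1, (v x + (x - 1) * deriv v x) := by
    apply intervalIntegral.integral_congr_ae
    filter_upwards [haeq, ae_ne_one] with x hrd hne hx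
    rw [uIoc_of_le (by norm_num : (1/2:ℝ) ≤ 1)] at hx
    have hx01 : x ∈ Ioo (0:ℝ) 1 := ⟨lt_trans (by norm_num) hx.1, lt_of_le_of_ne hx.2 hne⟩
    rw [hrd hx01]
  have hsplit2 : (∫ x in (1/2:ℝ)..1, (v x + (x - 1) * deriv v x))
      = (∫ x in (1/2:ℝ)..1, v x) + ∫ x in (1/2:ℝ)..1, (x - 1) * deriv v x :=
    integral_add (hvI (1/2) 1 (by norm_num) (Icc_subset_Icc (by norm_num) le_rfl)) hx1DI
  have hx1Dval : (∫ x in (1/2:ℝ)..1, (x - 1) * deriv v x)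
      = 1/2 * v (1/2) - ∫ x in (1/2:ℝ)..1, v x := by
    rw [hCe2, hsplit2] at hC2
    linarith
  -- the quadratic remainder term
  have hGm : Measurable G := G_cont.measurable
  have hQI : IntervalIntegrable (fun x => 1/2 * (deriv v x - G x)^2) volume 0 1 := by
    refine II_aux (C := 1/2 * (CK + 1)^2)
      (((hDmeas.sub hGm).pow_const 2).const_mul (1/2)).aestronglyMeasurable ?_
      (by norm_num) (subset_refl _)
    intro x hx
    have hD := hDb x hx
    have habs : |G x| ≤ 1 := by rw [abs_of_nonneg (G_nonneg x)]; exact G_le hx.2.le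
    have h1 : |deriv v x - G x| ≤ CK + 1 := by
      have h0 := abs_add_le (deriv v x) (-(G x))
      rw [abs_neg] at h0
      calc |deriv v x - G x| = |deriv v x + -(G x)| := by ring_nf
        _ ≤ |deriv v x| + |G x| := h0
        _ ≤ CK + 1 := add_le_add hD habs
    have h2 : (deriv v x - G x)^2 ≤ (CK+1)^2 :=
      sq_le_sq' (abs_le.1 h1).1 (abs_le.1 h1).2
    rw [abs_of_nonneg (by positivity)]
    simp only [Pi.sub_apply]
    linarith
  -- the linearized term R
  have hRm : AEStronglyMeasurable (fun x => (G x - x) * deriv v x + v x)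
      (volume.restrict (Ioc (0:ℝ) 1)) :=
    (((hGm.sub measurable_id).mul hDmeas).aestronglyMeasurable).add hvm
  have hRbd : ∀ x ∈ Ioo (0:ℝ) 1, |(G x - x) * deriv v x + v x| ≤ 1 * CK + Cv := by
    intro x hx
    have hD := hDb x hx
    have hv := hvb x hx
    have hGx : |G x - x| ≤ 1 :=
      abs_le.2 ⟨by linarith [G_nonneg x, hx.2.le], by linarith [G_le hx.2.le, hx.1.le]⟩
    calc |(G x - x) * deriv v x + v x| ≤ |(G x - x) * deriv v x| + |v x| := abs_add_le _ _
      _ ≤ 1 * CK + Cv := add_le_add (abs_mul_le hGx hD) hv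
  have hRI : ∀ a b : ℝ, a ≤ b → Ioc a b ⊆ Ioc (0:ℝ) 1 →
      IntervalIntegrable (fun x => (G x - x) * deriv v x + v x) volume a b :=
    fun a b hab hsub => II_aux hRm hRbd hab hsub
  have hSc : Continuous (fun x : ℝ => 1/2 * (G x)^2) := continuous_const.mul (G_cont.pow 2)
  -- decompose L1d v
  have hsplitfun : (fun x => 1 / 2 * (deriv v x) ^ 2 + v x - x * deriv v x)
      = fun x => 1/2 * (deriv v x - G x)^2 + (((G x - x) * deriv v x + v x) - 1/2 * (G x)^2) :=
    funext fun x => by ring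
  have hLv : L1d v = (∫ x in (0:ℝ)..1, 1/2 * (deriv v x - G x)^2)
      + ((∫ x in (0:ℝ)..1, ((G x - x) * deriv v x + v x)) - ∫ x in (0:ℝ)..1, 1/2 * (G x)^2) := by
    rw [L1d]
    simp only [hsplitfun]
    rw [integral_add hQI ((hRI 0 1 (by norm_num) (subset_refl _)).sub (hSc.intervalIntegrable _ _)),
      integral_sub (hRI 0 1 (by norm_num) (subset_refl _)) (hSc.intervalIntegrable _ _)]
  have hQpos : 0 ≤ ∫ x in (0:ℝ)..1, 1/2 * (deriv v x - G x)^2 :=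
    integral_nonneg (by norm_num) (fun u _ => by positivity)
  -- value of the S-integral
  have hSval : (∫ x in (0:ℝ)..1, 1/2 * (G x)^2) = 1/12 := by
    have hI1 : IntervalIntegrable (fun x : ℝ => 1/2*(G x)^2) volume 0 (1/2) :=
      hSc.intervalIntegrable _ _
    have hI2 : IntervalIntegrable (fun x : ℝ => 1/2*(G x)^2) volume (1/2) 1 :=
      hSc.intervalIntegrable _ _
    rw [← integral_add_adjacent_intervals hI1 hI2]
    have e1 : (∫ x in (0:ℝ)..(1/2), 1/2*(G x)^2) = 0 := by
      have he : EqOn (fun x : ℝ => 1/2*(G x)^2) (fun _ => (0:ℝ)) (uIcc (0:ℝ) (1/2)) := by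
        rw [uIcc_of_le (by norm_num)]
        intro x hx
        simp only
        rw [G_eq_of_le hx.2]; ring
      rw [integral_congr he]
      exact intervalIntegral.integral_zero
    have e2 : (∫ x in (1/2:ℝ)..1, 1/2*(G x)^2) = 1/12 := by
      have he : EqOn (fun x : ℝ => 1/2*(G x)^2) (fun x : ℝ => 2*x^2 - 2*x + 1/2)
          (uIcc (1/2:ℝ) 1) := by
        rw [uIcc_of_le (by norm_num)]
        intro x hx
        simp only
        rw [G_eq_of_ge hx.1]; ring
      have hAD : ∀ x ∈ uIcc (1/2:ℝ) 1,
          HasDerivAt (fun y : ℝ => 2/3*y^3 - y^2 + 1/2*y) (2*x^2 - 2*x + 1/2) x := by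
        intro x _
        have h1 := (hasDerivAt_pow 3 x).const_mul (2/3:ℝ)
        have h2 := hasDerivAt_pow 2 x
        have h3 := (hasDerivAt_id x).const_mul (1/2:ℝ)
        exact ((h1.sub h2).add h3).congr_deriv (by push_cast; ring)
      have hII : IntervalIntegrable (fun x : ℝ => 2*x^2 - 2*x + 1/2) volume (1/2) 1 :=
        (by fun_prop : Continuous (fun x : ℝ => 2*x^2 - 2*x + 1/2)).intervalIntegrable _ _
      rw [integral_congr he, integral_eq_sub_of_hasDerivAt hAD hII]
      norm_num
    rw [e1, e2]
    norm_num
  -- value of the R-integral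
  have hR1 : (∫ x in (0:ℝ)..(1/2), ((G x - x) * deriv v x + v x))
      = 2 * (∫ x in (0:ℝ)..(1/2), v x) - 1/2 * v (1/2) := by
    have he : EqOn (fun x => (G x - x) * deriv v x + v x) (fun x => v x - x * deriv v x)
        (uIcc (0:ℝ) (1/2)) := by
      rw [uIcc_of_le (by norm_num)]
      intro x hx
      simp only
      rw [G_eq_of_le hx.2]; ring
    rw [integral_congr he,
      integral_sub (hvI 0 (1/2) (by norm_num) (Icc_subset_Icc le_rfl (by norm_num))) hxDI,
      hxDval]
    ring
  have hR2 : (∫ x in (1/2:ℝ)..1, ((G x - x) * deriv v x + v x)) = 1/2 * v (1/2) := by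
    have he : EqOn (fun x => (G x - x) * deriv v x + v x) (fun x => (x - 1) * deriv v x + v x)
        (uIcc (1/2:ℝ) 1) := by
      rw [uIcc_of_le (by norm_num)]
      intro x hx
      simp only
      rw [G_eq_of_ge hx.1]; ring
    rw [integral_congr he,
      integral_add hx1DI (hvI (1/2) 1 (by norm_num) (Icc_subset_Icc (by norm_num) le_rfl)),
      hx1Dval]
    ring
  have hRval : (∫ x in (0:ℝ)..1, ((G x - x) * deriv v x + v x))
      = 2 * ∫ x in (0:ℝ)..(1/2), v x := by
    rw [← integral_add_adjacent_intervals
        (hRI 0 (1/2) (by norm_num) (Ioc_subset_Ioc le_rfl (by norm_num)))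
        (hRI (1/2) 1 (by norm_num) (Ioc_subset_Ioc (by norm_num) le_rfl)),
      hR1, hR2]
    ring
  have hvpos : 0 ≤ ∫ x in (0:ℝ)..(1/2), v x :=
    integral_nonneg (by norm_num) (fun u hu => hv0 u ⟨hu.1, hu.2.trans (by norm_num)⟩)
  rw [hLv, hSval, hRval]
  linarith
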